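/- Let A be a real symmetric n×n matrix with spectral decomposition given by distinct real eigenvalues θ_1,…,θ_m and idempotents E_1,…,E_m, and let P and Q be real density matrices. If there is pretty good state transfer from P to Q, then E_r·P·E_r = E_r·Q·E_r for every r, and for every pair (r,s) there is a sign ε ∈ {1,−1} such that E_r·P·E_s = ε·E_r·Q·E_s. -/

import Mathlib

open Matrix
open scoped ComplexOrder

/-- The transition matrix `U(t) = exp(itA)`. -/
noncomputable def U {n : ℕ} (A : Matrix (Fin n) (Fin n) ℂ) (t : ℝ) :
    Matrix (Fin n) (Fin n) ℂ :=
  NormedSpace.exp (((t : ℂ) * Complex.I) • A)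

/-- The Frobenius norm of a complex matrix. -/
noncomputable def fnorm {n : ℕ} (M : Matrix (Fin n) (Fin n) ℂ) : ℝ :=
  Real.sqrt (∑ i, ∑ j, ‖M i j‖ ^ 2)

lemma aux_abs_le_fnorm {n : ℕ} (M : Matrix (Fin n) (Fin n) ℂ) (i j : Fin n) :
    ‖M i j‖ ≤ fnorm M := by
  have h1 : ‖M i j‖ = Real.sqrt (‖M i j‖ ^ 2) := by
    rw [Real.sqrt_sq (norm_nonneg _)]
  rw [h1, fnorm]
  apply Real.sqrt_le_sqrt
  calc ‖M i j‖ ^ 2 ≤ ∑ j', ‖M i j'‖ ^ 2 :=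
        Finset.single_le_sum (f := fun j' => ‖M i j'‖ ^ 2)
          (fun _ _ => sq_nonneg _) (Finset.mem_univ j)
  _ ≤ ∑ i', ∑ j', ‖M i' j'‖ ^ 2 :=
        Finset.single_le_sum (f := fun i' => ∑ j', ‖M i' j'‖ ^ 2)
          (fun _ _ => Finset.sum_nonneg fun _ _ => sq_nonneg _) (Finset.mem_univ i)

lemma aux_fnorm_nonneg {n : ℕ} (M : Matrix (Fin n) (Fin n) ℂ) : 0 ≤ fnorm M :=
  Real.sqrt_nonneg _

lemma aux_entry_bound {n : ℕ} (B D C : Matrix (Fin n) (Fin n) ℂ) (i j : Fin n) :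
    ‖(B * D * C) i j‖ ≤
      ((n * n : ℝ) * (∑ p, ∑ a, ‖B p a‖) * (∑ b, ∑ q, ‖C b q‖))
        * fnorm D := by
  have hentry : (B * D * C) i j = ∑ b, ∑ a, B i a * D a b * C b j := by
    simp_rw [Matrix.mul_apply, Finset.sum_mul]
  have hB : ∀ a, ‖B i a‖ ≤ ∑ p, ∑ a', ‖B p a'‖ := by
    intro a
    calc ‖B i a‖ ≤ ∑ a', ‖B i a'‖ :=
          Finset.single_le_sum (fun _ _ => norm_nonneg _) (Finset.mem_univ a)
    _ ≤ ∑ p, ∑ a', ‖B p a'‖ :=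
          Finset.single_le_sum (f := fun p => ∑ a', ‖B p a'‖)
            (fun _ _ => Finset.sum_nonneg fun _ _ => norm_nonneg _) (Finset.mem_univ i)
  have hC : ∀ b, ‖C b j‖ ≤ ∑ b', ∑ q, ‖C b' q‖ := by
    intro b
    calc ‖C b j‖ ≤ ∑ q, ‖C b q‖ :=
          Finset.single_le_sum (fun _ _ => norm_nonneg _) (Finset.mem_univ j)
    _ ≤ ∑ b', ∑ q, ‖C b' q‖ :=
          Finset.single_le_sum (f := fun b' => ∑ q, ‖C b' q‖)
            (fun _ _ => Finset.sum_nonneg fun _ _ => norm_nonneg _) (Finset.mem_univ b)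
  rw [hentry]
  set SB := ∑ p, ∑ a', ‖B p a'‖ with hSB
  set SC := ∑ b', ∑ q, ‖C b' q‖ with hSC
  have hSBnn : 0 ≤ SB := Finset.sum_nonneg fun _ _ => Finset.sum_nonneg fun _ _ => norm_nonneg _
  have hSCnn : 0 ≤ SC := Finset.sum_nonneg fun _ _ => Finset.sum_nonneg fun _ _ => norm_nonneg _
  calc ‖∑ b, ∑ a, B i a * D a b * C b j‖
      ≤ ∑ b, ‖∑ a, B i a * D a b * C b j‖ := norm_sum_le _ _
    _ ≤ ∑ b, ∑ a, ‖B i a * D a b * C b j‖ :=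
        Finset.sum_le_sum fun b _ => norm_sum_le _ _
    _ ≤ ∑ b : Fin n, ∑ a : Fin n, SB * fnorm D * SC := by
        apply Finset.sum_le_sum; intro b _; apply Finset.sum_le_sum; intro a _
        rw [norm_mul, norm_mul]
        have h1 : ‖B i a‖ * ‖D a b‖ ≤ SB * fnorm D :=
          mul_le_mul (hB a) (aux_abs_le_fnorm D a b) (norm_nonneg _) hSBnn
        exact mul_le_mul h1 (hC b) (norm_nonneg _)
          (mul_nonneg hSBnn (aux_fnorm_nonneg D))
    _ = (n * n : ℝ) * SB * SC * fnorm D := by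
        simp [Finset.sum_const, Finset.card_univ]; ring

lemma aux_mulE_exp {n : ℕ} {B X : Matrix (Fin n) (Fin n) ℂ} {c : ℂ}
    (h : B * X = c • B) : B * NormedSpace.exp X = Complex.exp c • B := by
  letI : SeminormedRing (Matrix (Fin n) (Fin n) ℂ) := Matrix.linftyOpSemiNormedRing
  letI : NormedRing (Matrix (Fin n) (Fin n) ℂ) := Matrix.linftyOpNormedRing
  letI : NormedAlgebra ℂ (Matrix (Fin n) (Fin n) ℂ) := Matrix.linftyOpNormedAlgebra
  have hpow : ∀ k : ℕ, B * X ^ k = c ^ k • B := by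
    intro k; induction k with
    | zero => simp
    | succ k ih =>
      rw [pow_succ, ← mul_assoc, ih, smul_mul_assoc, h, smul_smul, ← pow_succ]
  have hsum : Summable fun k : ℕ => (k.factorial : ℂ)⁻¹ • X ^ k :=
    NormedSpace.expSeries_summable' (𝕂 := ℂ) X
  have hsumc : Summable fun k : ℕ => (k.factorial : ℂ)⁻¹ * c ^ k := by
    simpa [smul_eq_mul] using NormedSpace.expSeries_summable' (𝕂 := ℂ) c
  rw [NormedSpace.exp_eq_tsum ℂ, ← hsum.tsum_mul_left B]
  have h2 : ∀ k : ℕ, B * ((k.factorial : ℂ)⁻¹ • X ^ k) = ((k.factorial : ℂ)⁻¹ * c ^ k) • B := by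
    intro k; rw [mul_smul_comm, hpow, smul_smul]
  simp_rw [h2]
  rw [Summable.tsum_smul_const hsumc]
  congr 1
  rw [Complex.exp_eq_exp_ℂ, NormedSpace.exp_eq_tsum ℂ]
  simp [smul_eq_mul]

lemma aux_exp_mulE {n : ℕ} {B X : Matrix (Fin n) (Fin n) ℂ} {c : ℂ}
    (h : X * B = c • B) : NormedSpace.exp X * B = Complex.exp c • B := by
  letI : SeminormedRing (Matrix (Fin n) (Fin n) ℂ) := Matrix.linftyOpSemiNormedRing
  letI : NormedRing (Matrix (Fin n) (Fin n) ℂ) := Matrix.linftyOpNormedRing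
  letI : NormedAlgebra ℂ (Matrix (Fin n) (Fin n) ℂ) := Matrix.linftyOpNormedAlgebra
  have hpow : ∀ k : ℕ, X ^ k * B = c ^ k • B := by
    intro k; induction k with
    | zero => simp
    | succ k ih =>
      rw [pow_succ, mul_assoc, h, mul_smul_comm, ih, smul_smul, ← pow_succ']
  have hsum : Summable fun k : ℕ => (k.factorial : ℂ)⁻¹ • X ^ k :=
    NormedSpace.expSeries_summable' (𝕂 := ℂ) X
  have hsumc : Summable fun k : ℕ => (k.factorial : ℂ)⁻¹ * c ^ k := by
    simpa [smul_eq_mul] using NormedSpace.expSeries_summable' (𝕂 := ℂ) c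
  rw [NormedSpace.exp_eq_tsum ℂ, ← hsum.tsum_mul_right B]
  have h2 : ∀ k : ℕ, ((k.factorial : ℂ)⁻¹ • X ^ k) * B = ((k.factorial : ℂ)⁻¹ * c ^ k) • B := by
    intro k; rw [smul_mul_assoc, hpow, smul_smul]
  simp_rw [h2]
  rw [Summable.tsum_smul_const hsumc]
  congr 1
  rw [Complex.exp_eq_exp_ℂ, NormedSpace.exp_eq_tsum ℂ]
  simp [smul_eq_mul]

section spec
variable {n m : ℕ}
    (A : Matrix (Fin n) (Fin n) ℂ)
    (θ : Fin m → ℝ)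
    (E : Fin m → Matrix (Fin n) (Fin n) ℂ)

lemma aux_EA (hEmul : ∀ r s : Fin m, E r * E s = if r = s then E r else 0)
    (hspec : A = ∑ r, (θ r : ℂ) • E r) (r : Fin m) :
    E r * A = (θ r : ℂ) • E r := by
  rw [hspec, Finset.mul_sum]
  rw [Finset.sum_eq_single r]
  · rw [Matrix.mul_smul, hEmul, if_pos rfl]
  · intro s _ hs
    rw [Matrix.mul_smul, hEmul, if_neg (Ne.symm hs), smul_zero]
  · intro hr; exact absurd (Finset.mem_univ r) hr

lemma aux_AE (hEmul : ∀ r s : Fin m, E r * E s = if r = s then E r else 0)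
    (hspec : A = ∑ r, (θ r : ℂ) • E r) (s : Fin m) :
    A * E s = (θ s : ℂ) • E s := by
  rw [hspec, Finset.sum_mul]
  rw [Finset.sum_eq_single s]
  · rw [Matrix.smul_mul, hEmul, if_pos rfl]
  · intro r _ hr
    rw [Matrix.smul_mul, hEmul, if_neg hr, smul_zero]
  · intro hr; exact absurd (Finset.mem_univ s) hr

lemma aux_E_U (hEmul : ∀ r s : Fin m, E r * E s = if r = s then E r else 0)
    (hspec : A = ∑ r, (θ r : ℂ) • E r) (r : Fin m) (t : ℝ) :
    E r * U A t = Complex.exp ((t : ℂ) * Complex.I * (θ r : ℂ)) • E r := by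
  apply aux_mulE_exp
  rw [mul_smul_comm, aux_EA A θ E hEmul hspec r, smul_smul]

lemma aux_U_E (hEmul : ∀ r s : Fin m, E r * E s = if r = s then E r else 0)
    (hspec : A = ∑ r, (θ r : ℂ) • E r) (s : Fin m) (t : ℝ) :
    U A t * E s = Complex.exp ((t : ℂ) * Complex.I * (θ s : ℂ)) • E s := by
  apply aux_exp_mulE
  rw [smul_mul_assoc, aux_AE A θ E hEmul hspec s, smul_smul]

/-- Reality of the idempotents. -/
lemma aux_E_real (hAreal : ∀ i j, (A i j).im = 0)
    (hθ : Function.Injective θ)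
    (hEmul : ∀ r s : Fin m, E r * E s = if r = s then E r else 0)
    (hEsum : ∑ r, E r = 1)
    (hspec : A = ∑ r, (θ r : ℂ) • E r) :
    ∀ r i j, ((E r) i j).im = 0 := by
  classical
  set F : Fin m → Matrix (Fin n) (Fin n) ℂ :=
    fun r => (E r).map (starRingEnd ℂ) with hF
  have hAmap : A.map (starRingEnd ℂ) = A := by
    ext i j
    simp only [Matrix.map_apply]
    exact Complex.conj_eq_iff_im.mpr (hAreal i j)
  have hAF : ∀ s, A * F s = (θ s : ℂ) • F s := by
    intro s
    have h0 := congrArg (fun M => M.map (starRingEnd ℂ)) (aux_AE A θ E hEmul hspec s)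
    rw [Matrix.map_mul, hAmap] at h0
    rw [h0]
    ext i j
    simp [Matrix.map_apply, Matrix.smul_apply, smul_eq_mul, _root_.map_mul, Complex.conj_ofReal, hF]
  have hEF : ∀ r s, r ≠ s → E r * F s = 0 := by
    intro r s hrs
    have h1 : (E r * A) * F s = (θ r : ℂ) • (E r * F s) := by
      rw [aux_EA A θ E hEmul hspec r, Matrix.smul_mul]
    have h2 : E r * (A * F s) = (θ s : ℂ) • (E r * F s) := by
      rw [hAF s, Matrix.mul_smul]
    rw [mul_assoc] at h1
    have h3 : ((θ r : ℂ) - (θ s : ℂ)) • (E r * F s) = 0 := by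
      rw [sub_smul, ← h1, ← h2, sub_self]
    have h4 : ((θ r : ℂ) - (θ s : ℂ)) ≠ 0 := by
      rw [sub_ne_zero]
      exact_mod_cast fun h => hrs (hθ (by exact_mod_cast h))
    exact (smul_eq_zero.mp h3).resolve_left h4
  have hFE : ∀ r s, r ≠ s → E r * F s = 0 := hEF
  have hFsum : ∑ s, F s = 1 := by
    ext i j
    have h1 : (∑ s, F s) i j = (starRingEnd ℂ) ((∑ s, E s) i j) := by
      simp [Matrix.sum_apply, hF, Matrix.map_apply, map_sum]
    rw [h1, hEsum]
    rcases eq_or_ne i j with h | h <;> simp [Matrix.one_apply, h]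
  have hkey : ∀ r, E r = F r := by
    intro r
    have h1 : E r * F r = E r := by
      have h2 : ∑ s, E r * F s = E r * F r := by
        rw [Finset.sum_eq_single r]
        · intro s _ hs; exact hEF r s (Ne.symm hs)
        · intro h; exact absurd (Finset.mem_univ r) h
      calc E r * F r = ∑ s, E r * F s := h2.symm
        _ = E r * ∑ s, F s := (Finset.mul_sum _ _ _).symm
        _ = E r := by rw [hFsum, mul_one]
    have h3 : E r * F r = F r := by
      have h2 : ∑ s, E s * F r = E r * F r := by
        rw [Finset.sum_eq_single r]
        · intro s _ hs; exact hEF s r hs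
        · intro h; exact absurd (Finset.mem_univ r) h
      calc E r * F r = ∑ s, E s * F r := h2.symm
        _ = (∑ s, E s) * F r := (Finset.sum_mul _ _ _).symm
        _ = F r := by rw [hEsum, one_mul]
    rw [← h1, h3]
  intro r i j
  have h4 : E r i j = F r i j := by rw [← hkey r]
  have h5 : (starRingEnd ℂ) (E r i j) = E r i j := by
    rw [hF] at h4
    simpa [Matrix.map_apply] using h4.symm
  exact Complex.conj_eq_iff_im.mp h5
end spec

lemma aux_real_eq_zero {x : ℝ} (hx : 0 ≤ x) (h : ∀ ε : ℝ, 0 < ε → x < ε) : x = 0 := by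
  by_contra hne
  exact lt_irrefl x (h x (lt_of_le_of_ne hx (Ne.symm hne)))

lemma aux_abs_phase (t δ : ℝ) :
    ‖Complex.exp ((t : ℂ) * Complex.I * (δ : ℂ))‖ = 1 := by
  rw [Complex.norm_exp]
  have : ((t : ℂ) * Complex.I * (δ : ℂ)).re = 0 := by
    simp [Complex.mul_re, Complex.mul_im]
  rw [this, Real.exp_zero]

lemma aux_mul_real {n : ℕ} {X Y : Matrix (Fin n) (Fin n) ℂ}
    (hX : ∀ i j, (X i j).im = 0) (hY : ∀ i j, (Y i j).im = 0) :
    ∀ i j, ((X * Y) i j).im = 0 := by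
  intro i j
  rw [Matrix.mul_apply, Complex.im_sum]
  apply Finset.sum_eq_zero
  intro k _
  rw [Complex.mul_im, hX, hY]
  ring

/-- The key approximation lemma. -/
lemma aux_sign {n : ℕ} {M N : Matrix (Fin n) (Fin n) ℂ} (δ : ℝ)
    (hM : ∀ i j, (M i j).im = 0) (hN : ∀ i j, (N i j).im = 0)
    (h : ∀ ε : ℝ, 0 < ε → ∃ t : ℝ, ∀ i j,
      ‖Complex.exp ((t : ℂ) * Complex.I * (δ : ℂ)) * M i j - N i j‖ < ε) :
    ∃ z : ℝ, (z = 1 ∨ z = -1) ∧ M = (z : ℂ) • N := by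
  by_cases hN0 : N = 0
  · refine ⟨1, Or.inl rfl, ?_⟩
    subst hN0
    ext i j
    simp only [Matrix.smul_apply, Matrix.zero_apply, smul_zero]
    have : ‖M i j‖ = 0 := by
      apply aux_real_eq_zero (norm_nonneg _)
      intro ε hε
      obtain ⟨t, ht⟩ := h ε hε
      have := ht i j
      simpa [aux_abs_phase t δ, norm_mul] using this
    simpa using this
  · -- pick a nonzero entry of N
    obtain ⟨i, j, hij⟩ : ∃ i j, N i j ≠ 0 := by
      by_contra hc
      push_neg at hc
      exact hN0 (by ext i j; simpa using hc i j)
    -- abs equality at (i,j)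
    have habs : ‖M i j‖ = ‖N i j‖ := by
      have key : ∀ ε : ℝ, 0 < ε → |‖M i j‖ - ‖N i j‖| < ε := by
        intro ε hε
        obtain ⟨t, ht⟩ := h ε hε
        have h1 := ht i j
        have h2 : ‖Complex.exp ((t : ℂ) * Complex.I * (δ : ℂ)) * M i j‖
            = ‖M i j‖ := by
          rw [norm_mul, aux_abs_phase t δ, one_mul]
        calc |‖M i j‖ - ‖N i j‖|
            = |‖Complex.exp ((t : ℂ) * Complex.I * (δ : ℂ)) * M i j‖
                - ‖N i j‖| := by rw [h2]
          _ ≤ ‖Complex.exp ((t : ℂ) * Complex.I * (δ : ℂ)) * M i j - N i j‖ :=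
              abs_norm_sub_norm_le _ _
          _ < ε := h1
      have := aux_real_eq_zero (abs_nonneg _) key
      linarith [abs_eq_zero.mp this]
    have hMij : M i j ≠ 0 := by
      intro hz
      rw [hz] at habs
      simp at habs
      exact hij (norm_eq_zero.mp habs.symm)
    set w : ℂ := M i j / N i j with hw
    have hwabs : ‖w‖ = 1 := by
      rw [hw, norm_div, habs, div_self]
      simpa using hij
    have hwim : w.im = 0 := by
      rw [hw, Complex.div_im, hM, hN]
      simp
    have hwre : w = ((w.re : ℝ) : ℂ) := by
      exact (Complex.ext_iff.mpr ⟨by simp, by simp [hwim]⟩)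
    have hwpm : w.re = 1 ∨ w.re = -1 := by
      have : |w.re| = 1 := by
        rw [hwre] at hwabs
        simpa using hwabs
      rcases abs_eq (by norm_num : (0:ℝ) ≤ 1) |>.mp this with h1 | h1
      · exact Or.inl h1
      · exact Or.inr h1
    refine ⟨w.re, hwpm, ?_⟩
    ext k l
    rw [Matrix.smul_apply, smul_eq_mul, ← hwre]
    have hNij : ‖N i j‖ > 0 := by
      simpa [norm_pos_iff] using hij
    -- claim: for all ε > 0, abs (M k l - w * N k l) < ε * (abs (N k l) / abs (N i j) + 1)
    have key : ∀ ε : ℝ, 0 < ε →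
        ‖M k l - w * N k l‖ ≤ ε * (‖N k l‖ / ‖N i j‖ + 1) := by
      intro ε hε
      obtain ⟨t, ht⟩ := h ε hε
      set e := Complex.exp ((t : ℂ) * Complex.I * (δ : ℂ)) with he
      -- |e * M i j - N i j| < ε, and w * N i j = M i j
      have hwN : w * N i j = M i j := div_mul_cancel₀ _ hij
      -- Alternative: |e * M ij - N ij| = |e * (w N ij) - N ij| = |e w - 1| |N ij|
      have h1 : ‖e * w - 1‖ < ε / ‖N i j‖ := by
        have : (e * w - 1) * N i j = e * M i j - N i j := by
          rw [sub_mul, mul_assoc, hwN, one_mul]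
        have h2 := ht i j
        rw [← this] at h2
        rw [norm_mul] at h2
        rw [lt_div_iff₀ hNij]
        exact h2
      -- |M kl - w N kl|: note e * M kl ≈ N kl and |e| = 1 so M kl ≈ e⁻¹ N kl...
      -- M kl - w N kl = e⁻¹ * (e * M kl - N kl) + (e⁻¹ - w) * N kl
      have he1 : ‖e‖ = 1 := aux_abs_phase t δ
      have hene : e ≠ 0 := by
        intro h0; rw [h0] at he1; simp at he1
      have heq : M k l - w * N k l = e⁻¹ * (e * M k l - N k l) - e⁻¹ * (e * w - 1) * N k l := by
        field_simp
        ring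
      have habse : ‖e⁻¹‖ = 1 := by rw [norm_inv, he1]; norm_num
      calc ‖M k l - w * N k l‖
          ≤ ‖e⁻¹ * (e * M k l - N k l)‖
            + ‖e⁻¹ * (e * w - 1) * N k l‖ := by
            rw [heq]; exact norm_sub_le _ _
        _ ≤ ε + (ε / ‖N i j‖) * ‖N k l‖ := by
            apply add_le_add
            · rw [norm_mul, habse, one_mul]
              exact le_of_lt (ht k l)
            · rw [norm_mul, norm_mul, habse, one_mul]
              exact mul_le_mul (le_of_lt h1) (le_refl _) (norm_nonneg _)
                (le_of_lt (div_pos hε hNij))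
        _ = ε * (‖N k l‖ / ‖N i j‖ + 1) := by
            field_simp
            ring
    -- conclude equality
    have hzero : ‖M k l - w * N k l‖ = 0 := by
      set C : ℝ := ‖N k l‖ / ‖N i j‖ + 1 with hC
      have hCpos : 0 < C := by positivity
      apply aux_real_eq_zero (norm_nonneg _)
      intro ε hε
      have := key (ε / (2 * C)) (by positivity)
      calc ‖M k l - w * N k l‖ ≤ (ε / (2 * C)) * C := this
        _ = ε / 2 := by field_simp
        _ < ε := by linarith
    exact sub_eq_zero.mp (norm_eq_zero.mp hzero)


set_option maxHeartbeats 1000000 in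
/-- If `A` is real symmetric with spectral decomposition
`A = ∑ θ_r • E_r`, `P`, `Q` are real density matrices, and there is pretty good
state transfer from `P` to `Q`, then `E_r·P·E_r = E_r·Q·E_r` for all `r` and for
every pair `(r,s)` there is a sign `ε = ±1` with `E_r·P·E_s = ε·E_r·Q·E_s`. -/
theorem stmt_5 {n m : ℕ} (hn : 1 ≤ n)
    (A : Matrix (Fin n) (Fin n) ℂ)
    (hAreal : ∀ i j, (A i j).im = 0) (hAsym : Aᵀ = A)
    (θ : Fin m → ℝ) (hθ : Function.Injective θ)
    (E : Fin m → Matrix (Fin n) (Fin n) ℂ)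
    (hE0 : ∀ r, E r ≠ 0)
    (hEherm : ∀ r, (E r).IsHermitian)
    (hEmul : ∀ r s : Fin m, E r * E s = if r = s then E r else 0)
    (hEsum : ∑ r, E r = 1)
    (hspec : A = ∑ r, (θ r : ℂ) • E r)
    (P Q : Matrix (Fin n) (Fin n) ℂ)
    (hP : P.PosSemidef) (hPtr : P.trace = 1) (hPreal : ∀ i j, (P i j).im = 0)
    (hQ : Q.PosSemidef) (hQtr : Q.trace = 1) (hQreal : ∀ i j, (Q i j).im = 0)
    (hpgst : ∀ ε : ℝ, 0 < ε → ∃ t : ℝ, fnorm (U A t * P * U A (-t) - Q) < ε) :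
    (∀ r : Fin m, E r * P * E r = E r * Q * E r) ∧
      (∀ r s : Fin m, ∃ ε : ℝ, (ε = 1 ∨ ε = -1) ∧
        E r * P * E s = (ε : ℂ) • (E r * Q * E s)) := by
  have hEreal : ∀ r i j, ((E r) i j).im = 0 :=
    aux_E_real A θ E hAreal hθ hEmul hEsum hspec
  -- key approximation
  have hkey : ∀ r s : Fin m, ∀ ε : ℝ, 0 < ε → ∃ t : ℝ, ∀ i j,
      ‖Complex.exp ((t : ℂ) * Complex.I * ((θ r - θ s : ℝ) : ℂ))
        * (E r * P * E s) i j - (E r * Q * E s) i j‖ < ε := by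
    intro r s ε hε
    set C : ℝ := (n * n : ℝ) * (∑ p, ∑ a, ‖E r p a‖)
      * (∑ b, ∑ q, ‖E s b q‖) with hCdef
    have hC : 0 ≤ C := by
      rw [hCdef]
      have h1 : (0:ℝ) ≤ ∑ p, ∑ a, ‖E r p a‖ :=
        Finset.sum_nonneg fun _ _ => Finset.sum_nonneg fun _ _ => norm_nonneg _
      have h2 : (0:ℝ) ≤ ∑ b, ∑ q, ‖E s b q‖ :=
        Finset.sum_nonneg fun _ _ => Finset.sum_nonneg fun _ _ => norm_nonneg _
      positivity
    obtain ⟨t, ht⟩ := hpgst (ε / (C + 1)) (by positivity)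
    refine ⟨t, fun i j => ?_⟩
    set D : Matrix (Fin n) (Fin n) ℂ := U A t * P * U A (-t) - Q with hD
    have h1 := aux_E_U A θ E hEmul hspec r t
    have h2 := aux_U_E A θ E hEmul hspec s (-t)
    have hsand : E r * D * E s
        = Complex.exp ((t : ℂ) * Complex.I * ((θ r - θ s : ℝ) : ℂ)) • (E r * P * E s)
          - E r * Q * E s := by
      rw [hD, Matrix.mul_sub, Matrix.sub_mul]
      congr 1
      have h3 : E r * (U A t * P * U A (-t)) * E s
          = (E r * U A t) * P * (U A (-t) * E s) := by
        simp only [mul_assoc]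
      rw [h3, h1, h2, Matrix.smul_mul, Matrix.smul_mul, Matrix.mul_smul, smul_smul]
      congr 1
      rw [← Complex.exp_add]
      congr 1
      push_cast
      ring
    have hentry : Complex.exp ((t : ℂ) * Complex.I * ((θ r - θ s : ℝ) : ℂ))
        * (E r * P * E s) i j - (E r * Q * E s) i j = (E r * D * E s) i j := by
      rw [hsand, Matrix.sub_apply, Matrix.smul_apply, smul_eq_mul]
    rw [hentry]
    have hb := aux_entry_bound (E r) D (E s) i j
    have hfnn := aux_fnorm_nonneg D
    calc ‖(E r * D * E s) i j‖ ≤ C * fnorm D := hb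
      _ ≤ (C + 1) * fnorm D := mul_le_mul_of_nonneg_right (by linarith) hfnn
      _ < (C + 1) * (ε / (C + 1)) := by
          apply (mul_lt_mul_iff_right₀ (by positivity)).mpr
          exact ht
      _ = ε := by field_simp
  constructor
  · intro r
    ext i j
    have hz : ‖(E r * P * E r) i j - (E r * Q * E r) i j‖ = 0 := by
      apply aux_real_eq_zero (norm_nonneg _)
      intro ε hε
      obtain ⟨t, ht⟩ := hkey r r ε hε
      have := ht i j
      simpa using this
    exact sub_eq_zero.mp (norm_eq_zero.mp hz)
  · intro r s
    have hMreal : ∀ i j, ((E r * P * E s) i j).im = 0 :=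
      aux_mul_real (aux_mul_real (hEreal r) hPreal) (hEreal s)
    have hNreal : ∀ i j, ((E r * Q * E s) i j).im = 0 :=
      aux_mul_real (aux_mul_real (hEreal r) hQreal) (hEreal s)
    obtain ⟨z, hz, hMN⟩ := aux_sign (θ r - θ s) hMreal hNreal (hkey r s)
    exact ⟨z, hz, hMN⟩
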